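/- arXiv:0809.1700 — 5 statements merged into one kernel-verified Lean document; each statement's English description precedes it below -/
import Mathlib

section
/- For the sequences defined by p_0 = 0, q_0 = 1, p_{n+1} = (κ+1)p_n + κ q_n, q_{n+1} = p_n + q_n, for all m ≥ 1 and n ≥ m−1: −(q_1 + ⋯ + q_{m−1})·p_n + q_m·q_n = q_{n−(m−1)}. -/
theorem stmt3 (κ : ℕ) (hκ : 1 ≤ κ) (p q : ℕ → ℤ) (hp0 : p 0 = 0) (hq0 : q 0 = 1)
    (hp : ∀ n, p (n + 1) = (κ + 1) * p n + κ * q n)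
    (hq : ∀ n, q (n + 1) = p n + q n) :
    ∀ m : ℕ, 1 ≤ m → ∀ n : ℕ, m - 1 ≤ n →
      -(∑ i ∈ Finset.Icc 1 (m - 1), q i) * p n + q m * q n = q (n - (m - 1)) := by
  have hq1 : q 1 = 1 := by rw [hq, hp0, hq0]; ring
  have hS : ∀ k, p k = κ * ∑ i ∈ Finset.Icc 1 k, q i := by
    intro k
    induction k with
    | zero => simp [hp0]
    | succ k ih =>
      rw [Finset.sum_Icc_succ_top (by omega : 1 ≤ k + 1), hp k, ih, hq k, ih]
      ring
  have key : ∀ k, ∀ n, k ≤ n →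
      -(∑ i ∈ Finset.Icc 1 k, q i) * p n + q (k + 1) * q n = q (n - k) := by
    intro k
    induction k with
    | zero => intro n _; simp [hq1]
    | succ k ih =>
      intro n hkn
      obtain ⟨n, rfl⟩ : ∃ n', n = n' + 1 := ⟨n - 1, by omega⟩
      have h1 := ih n (by omega)
      have e : n + 1 - (k + 1) = n - k := by omega
      rw [e, ← h1, hp n, hq n, Finset.sum_Icc_succ_top (by omega : 1 ≤ k + 1),
        hq (k + 1), hS (k + 1), Finset.sum_Icc_succ_top (by omega : 1 ≤ k + 1)]
      push_cast
      ring
  intro m hm n hn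
  obtain ⟨k, rfl⟩ : ∃ k, m = k + 1 := ⟨m - 1, by omega⟩
  simp only [Nat.add_sub_cancel] at hn ⊢
  exact key k n hn
end

section
/- For the sequences defined by p_0 = 0, q_0 = 1, p_{n+1} = (κ+1)p_n + κ q_n, q_{n+1} = p_n + q_n, we have q_m · q_n ≡ q_{n−m+1} (mod p_n) for all m ≥ 1 and n ≥ m−1. -/
theorem stmt4 (κ : ℕ) (hκ : 1 ≤ κ) (p q : ℕ → ℤ) (hp0 : p 0 = 0) (hq0 : q 0 = 1)
    (hp : ∀ n, p (n + 1) = (κ + 1) * p n + κ * q n)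
    (hq : ∀ n, q (n + 1) = p n + q n) :
    ∀ m : ℕ, 1 ≤ m → ∀ n : ℕ, m - 1 ≤ n →
      q m * q n ≡ q (n - m + 1) [ZMOD p n] := by
  have hinv : ∀ j, p j = p (j + 1) - κ * q (j + 1) := by
    intro j; rw [hp j, hq j]; ring
  have key : ∀ m : ℕ,
      (∀ n : ℕ, m - 1 ≤ n → p n ∣ q (n - m + 1) - q m * q n) ∧
      (∀ n : ℕ, m ≤ n → p n ∣ p m * q n + p (n - m)) := by
    intro m
    induction m with
    | zero =>
      constructor
      · intro n _
        have e : q (n - 0 + 1) - q 0 * q n = p n := by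
          rw [Nat.sub_zero, hq n, hq0]; ring
        rw [e]
      · intro n _
        have e : p 0 * q n + p (n - 0) = p n := by rw [Nat.sub_zero, hp0]; ring
        rw [e]
    | succ m ih =>
      obtain ⟨ihT, ihL⟩ := ih
      have T : ∀ n, m ≤ n → p n ∣ q (n - (m + 1) + 1) - q (m + 1) * q n := by
        intro n hn
        have h1 := ihT n (le_trans (Nat.sub_le m 1) hn)
        have h2 := ihL n hn
        have e : q (n - (m + 1) + 1) = q (n - m) := by
          rcases Nat.eq_or_lt_of_le hn with h | h
          · have : n - (m + 1) + 1 = 1 := by omega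
            have h0 : n - m = 0 := by omega
            rw [this, h0, hq 0, hp0, hq0]; ring
          · have : n - (m + 1) + 1 = n - m := by omega
            rw [this]
        have eq1 : q (n - m + 1) = p (n - m) + q (n - m) := hq (n - m)
        have eq2 : q (m + 1) = p m + q m := hq m
        have : q (n - (m + 1) + 1) - q (m + 1) * q n =
            (q (n - m + 1) - q m * q n) - (p m * q n + p (n - m)) := by
          rw [e, eq1, eq2]; ring
        rw [this]
        exact dvd_sub h1 h2
      refine ⟨fun n hn => T n (by omega), fun n hn => ?_⟩
      have h1 := ihT n (by omega)
      have h2 := ihL n (by omega)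
      have idx : n - m - 1 + 1 = n - m := by omega
      have idx2 : n - (m + 1) = n - m - 1 := by omega
      have e1 : p (n - m - 1) = p (n - m) - κ * q (n - m) := by
        have := hinv (n - m - 1)
        rwa [idx] at this
      have e2 : q (n - m + 1) = p (n - m) + q (n - m) := hq (n - m)
      have e3 : p (m + 1) = (κ + 1) * p m + κ * q m := hp m
      have : p (m + 1) * q n + p (n - (m + 1)) =
          (κ + 1) * (p m * q n + p (n - m)) - κ * (q (n - m + 1) - q m * q n) := by
        rw [idx2, e1, e2, e3]; ring
      rw [this]
      exact dvd_sub (Dvd.dvd.mul_left h2 _) (Dvd.dvd.mul_left h1 _)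
  intro m _ n hn
  exact Int.modEq_iff_dvd.mpr ((key m).1 n hn)
end

section
/- For the sequences defined by p_0 = 0, q_0 = 1, p_{n+1} = 3p_n + 2q_n, q_{n+1} = p_n + q_n, the Euler characteristic formula holds: 2 − p_n/2 + Σ_{k=1}^{n−1} (q_{n−k+1} − 1) = 2 − n for every n ≥ 1. -/
theorem stmt9 (p q : ℕ → ℤ) (hp0 : p 0 = 0) (hq0 : q 0 = 1)
    (hp : ∀ n, p (n + 1) = 3 * p n + 2 * q n)
    (hq : ∀ n, q (n + 1) = p n + q n) :
    ∀ n : ℕ, 1 ≤ n →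
      2 - p n / 2 + (∑ k ∈ Finset.Icc 1 (n - 1), (q (n - k + 1) - 1)) = 2 - (n : ℤ) := by
  have key : ∀ n : ℕ, 1 ≤ n → p n = 2 * (1 + ∑ j ∈ Finset.Icc 2 n, q j) := by
    intro n hn
    induction n with
    | zero => omega
    | succ m ih =>
      rcases Nat.eq_or_lt_of_le hn with h | h
      · have hm : m = 0 := by omega
        subst hm
        simp [hp 0, hp0, hq0]
      · have hm : 1 ≤ m := by omega
        have h2 : 2 ≤ m + 1 := by omega
        rw [Finset.sum_Icc_succ_top h2, hp m, ih hm, hq m, ih hm]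
        ring
  intro n hn
  have hdiv : p n / 2 = 1 + ∑ j ∈ Finset.Icc 2 n, q j := by
    rw [key n hn]; omega
  have hre : (∑ k ∈ Finset.Icc 1 (n - 1), (q (n - k + 1) - 1))
      = ∑ j ∈ Finset.Icc 2 n, (q j - 1) := by
    apply Finset.sum_nbij' (fun k => n - k + 1) (fun j => n - j + 1)
    · intro k hk; simp only [Finset.mem_Icc] at *; omega
    · intro j hj; simp only [Finset.mem_Icc] at *; omega
    · intro k hk; simp only [Finset.mem_Icc] at hk; omega
    · intro j hj; simp only [Finset.mem_Icc] at hj; omega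
    · intro k hk; rfl
  rw [hdiv, hre, Finset.sum_sub_distrib, Finset.sum_const, Nat.card_Icc]
  have : ((n + 1 - 2 : ℕ) : ℤ) = (n : ℤ) - 1 := by omega
  rw [nsmul_eq_mul, this]
  ring
end

section
/- For the sequences defined by p_0 = 0, q_0 = 1, p_{n+1} = 3p_n + 2q_n, q_{n+1} = p_n + q_n, and for integers n ≥ 3, 2 ≤ k ≤ n−1, 1 ≤ i ≤ (q_{n−k+1} − 1)/2: the index 2(q_n + q_{n−1} + ⋯ + q_{n−k+2}) + 2i − 1 lies strictly between 2q_n and p_n (so the leading disk patch of the first pair of the i-th compressing disk of the k-th step lies in the last region). -/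
theorem stmt15 (p q : ℕ → ℤ) (hp0 : p 0 = 0) (hq0 : q 0 = 1)
    (hp : ∀ n, p (n + 1) = 3 * p n + 2 * q n)
    (hq : ∀ n, q (n + 1) = p n + q n) :
    ∀ n : ℕ, 3 ≤ n → ∀ k : ℕ, 2 ≤ k → k ≤ n - 1 → ∀ i : ℤ, 1 ≤ i →
      i ≤ (q (n - k + 1) - 1) / 2 →
      2 * q n < 2 * (∑ j ∈ Finset.Icc (n - k + 2) n, q j) + 2 * i - 1 ∧
      2 * (∑ j ∈ Finset.Icc (n - k + 2) n, q j) + 2 * i - 1 < p n := by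
  intro n hn k hk2 hkn i hi1 hi2
  set m := n - k + 1 with hm
  have hpos : ∀ j, 1 ≤ q j ∧ 0 ≤ p j := by
    intro j
    induction j with
    | zero => simp [hp0, hq0]
    | succ j ih =>
      refine ⟨?_, ?_⟩
      · rw [hq j]; linarith [ih.1, ih.2]
      · rw [hp j]; linarith [ih.1, ih.2]
  have hpq : ∀ j, q j ≤ p j + 1 := by
    intro j
    induction j with
    | zero => simp [hp0, hq0]
    | succ j ih =>
      rw [hq j, hp j]
      linarith [(hpos j).1, (hpos j).2]
  have tele : ∀ d, p (m + d) = p m + 2 * ∑ j ∈ Finset.Icc (m + 1) (m + d), q j := by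
    intro d
    induction d with
    | zero => simp
    | succ d ih =>
      rw [show m + (d + 1) = (m + d) + 1 from rfl, hp (m + d),
        Finset.sum_Icc_succ_top (by omega : m + 1 ≤ m + d + 1), hq (m + d)]
      linarith [ih]
  have hmn : m + (k - 1) = n := by omega
  have hsum : Finset.Icc (n - k + 2) n = Finset.Icc (m + 1) (m + (k - 1)) := by
    rw [show n - k + 2 = m + 1 from by omega, hmn]
  have hpn : p n = p m + 2 * ∑ j ∈ Finset.Icc (n - k + 2) n, q j := by
    rw [hsum, ← hmn]; exact tele (k - 1)
  have hqS : q n ≤ ∑ j ∈ Finset.Icc (n - k + 2) n, q j := by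
    apply Finset.single_le_sum (f := q)
    · intro j _; linarith [(hpos j).1]
    · rw [Finset.mem_Icc]; omega
  have h2i : 2 * i ≤ q m - 1 := by omega
  constructor
  · linarith
  · linarith [hpq m]
end

section
/- For the sequences defined by p_0 = 0, q_0 = 1, p_{n+1} = 3p_n + 2q_n, q_{n+1} = p_n + q_n, and for any odd k with 1 ≤ k ≤ n−1, the following congruence modulo p_n holds: 2(q_n + q_{n−1} + ⋯ + q_{k+2}) + (Σ_{r=1}^{k} q_r) − 1 + q_n·q_{n−k} − Σ_{j=1}^{n−k−1} q_n·q_j − q_n + 1 ≡ q_1 + q_2 + ⋯ + q_{n−1} (mod p_n). -/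
theorem stmt19 (p q : ℕ → ℤ) (hp0 : p 0 = 0) (hq0 : q 0 = 1)
    (hp : ∀ n, p (n + 1) = 3 * p n + 2 * q n)
    (hq : ∀ n, q (n + 1) = p n + q n) :
    ∀ n : ℕ, ∀ k : ℕ, Odd k → 1 ≤ k → k ≤ n - 1 →
      2 * (∑ j ∈ Finset.Icc (k + 2) n, q j) + (∑ r ∈ Finset.Icc 1 k, q r) - 1 +
          q n * q (n - k) - (∑ j ∈ Finset.Icc 1 (n - k - 1), q n * q j) - q n + 1 ≡
        (∑ i ∈ Finset.Icc 1 (n - 1), q i) [ZMOD p n] := by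
  intro n k _hodd hk1 hkn
  have hq1 : q 1 = 1 := by rw [hq 0, hp0, hq0]; ring
  have hq2 : q 2 = 3 := by rw [hq 1, hp 0, hp0, hq0, hq1]; ring
  have hq4 : ∀ m, q (m + 2) = 4 * q (m + 1) - q m := by
    intro m
    rw [hq (m + 1), hp m, hq m]; ring
  have hn2 : 2 ≤ n := by omega
  -- key congruence as divisibility
  have key : ∀ m, 1 ≤ m → m ≤ n → p n ∣ (q (n - m + 1) - q n * q m) := by
    intro m
    induction m using Nat.strong_induction_on with
    | _ m ih =>
      intro h1 h2
      match m, h1, h2 with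
      | 1, _, h2 =>
        have : n - 1 + 1 = n := by omega
        rw [this, hq1]
        simp
      | 2, _, h2 =>
        have hu : n - 1 + 1 = n := by omega
        have hqn : q n = p (n - 1) + q (n - 1) := by
          have := hq (n - 1); rwa [hu] at this
        have hpn : p n = 3 * p (n - 1) + 2 * q (n - 1) := by
          have := hp (n - 1); rwa [hu] at this
        have : n - 2 + 1 = n - 1 := by omega
        rw [this, hq2]
        exact ⟨-1, by rw [hqn, hpn]; ring⟩
      | (m' + 3), _, h2 =>
        have d1 : p n ∣ (q (n - (m' + 2) + 1) - q n * q (m' + 2)) :=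
          ih (m' + 2) (by omega) (by omega) (by omega)
        have d2 : p n ∣ (q (n - (m' + 1) + 1) - q n * q (m' + 1)) :=
          ih (m' + 1) (by omega) (by omega) (by omega)
        obtain ⟨a, ha⟩ := d1
        obtain ⟨b, hb⟩ := d2
        set t := n - (m' + 3) + 1 with ht
        have ht1 : n - (m' + 2) + 1 = t + 1 := by omega
        have ht2 : n - (m' + 1) + 1 = t + 2 := by omega
        rw [ht1] at ha
        rw [ht2] at hb
        have hqt : q (t + 2) = 4 * q (t + 1) - q t := hq4 t
        have hqm : q (m' + 3) = 4 * q (m' + 2) - q (m' + 1) := hq4 (m' + 1)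
        exact ⟨4 * a - b, by rw [hqm]; have := hqt; linarith [ha, hb]⟩
  -- the two modular facts
  have d : p n ∣ q (k + 1) - q n * q (n - k) := by
    have := key (n - k) (by omega) (by omega)
    have h : n - (n - k) + 1 = k + 1 := by omega
    rwa [h] at this
  have hS : p n ∣ (∑ j ∈ Finset.Icc 1 (n - k - 1), q (n - j + 1)) -
      ∑ j ∈ Finset.Icc 1 (n - k - 1), q n * q j := by
    rw [← Finset.sum_sub_distrib]
    apply Finset.dvd_sum
    intro j hj
    rw [Finset.mem_Icc] at hj
    exact key j (by omega) (by omega)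
  -- reindexing
  have hre : (∑ j ∈ Finset.Icc 1 (n - k - 1), q (n - j + 1)) =
      ∑ i ∈ Finset.Icc (k + 2) n, q i := by
    apply Finset.sum_nbij' (fun j => n - j + 1) (fun i => n - i + 1) <;>
      intros a ha <;> simp only [Finset.mem_Icc] at * <;> omega
  -- exact sum identities
  have e1 : (∑ i ∈ Finset.Icc 1 n, q i) = (∑ i ∈ Finset.Icc 1 (n - 1), q i) + q n := by
    have h : n - 1 + 1 = n := by omega
    have := Finset.sum_Icc_succ_top (a := 1) (b := n - 1) (by omega) q
    rwa [h] at this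
  have e2 : (∑ i ∈ Finset.Icc 1 (k + 1), q i) = (∑ i ∈ Finset.Icc 1 k, q i) + q (k + 1) :=
    Finset.sum_Icc_succ_top (by omega) q
  have e3 : (∑ i ∈ Finset.Icc 1 (k + 1), q i) + (∑ i ∈ Finset.Icc (k + 2) n, q i) =
      ∑ i ∈ Finset.Icc 1 n, q i := by
    have h1 : Finset.Icc 1 (k + 1) = Finset.Ioc 0 (k + 1) := by
      rw [← Finset.Icc_add_one_left_eq_Ioc]; rfl
    have h2 : Finset.Icc (k + 2) n = Finset.Ioc (k + 1) n := by
      rw [← Finset.Icc_add_one_left_eq_Ioc]; rfl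
    have h3 : Finset.Icc 1 n = Finset.Ioc 0 n := by
      rw [← Finset.Icc_add_one_left_eq_Ioc]; rfl
    rw [h1, h2, h3]
    exact Finset.sum_Ioc_consecutive q (by omega) (by omega)
  -- assemble
  rw [Int.modEq_iff_dvd, ← hre]
  obtain ⟨a, ha⟩ := d
  obtain ⟨b, hb⟩ := hS
  exact ⟨a - b, by linarith [e1, e2, e3, hre, ha, hb]⟩
end
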